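/- Let G be a finite simple graph with minimum degree exactly 2, with average degree strictly less than 3, and containing no triangle in which two vertices have degree 2. Then G contains at least one of the following configurations: a path (2, 3^-, 3^-); a path v1v2v3v4 with degrees 2, 2, arbitrary, 2; a path with degrees (2, 2, 4, 3); a star with 4-vertex center whose neighbors have degrees 2, 2, 2, ≤6; a star with 4-vertex center and neighbor degrees 2, 2, 3, ≤5; a star with 4-vertex center and neighbor degrees 2, 3, 3, 3; a star with 5-vertex center and neighbor degrees 2, 2, 2, 2, 2; or a star with 5-vertex center and neighbor degrees 2, 2, 2, 2, 3. -/

import Mathlib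

open SimpleGraph Finset

section Aux

variable {V : Type} [Fintype V] [DecidableEq V] (G : SimpleGraph V) [DecidableRel G.Adj]

/-- heavy degree-2 vertex: degree 2 with a degree-2 neighbour -/
def MyHvy (v : V) : Prop := G.degree v = 2 ∧ ∃ u ∈ G.neighborFinset v, G.degree u = 2

/-- weak degree-3 vertex -/
def MyWk (v : V) : Prop := G.degree v = 3 ∧ ∃ u ∈ G.neighborFinset v, G.degree u = 2

instance : DecidablePred (MyHvy G) := fun v =>
  inferInstanceAs (Decidable (_ ∧ ∃ u ∈ G.neighborFinset v, _))

instance : DecidablePred (MyWk G) := fun v =>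
  inferInstanceAs (Decidable (_ ∧ ∃ u ∈ G.neighborFinset v, _))

/-- charge sent from `a` to `b` -/
def myg (a b : V) : ℚ :=
  if G.degree b = 2 then
    if 4 ≤ G.degree a then (if MyHvy G b then 1 else 1/2)
    else if G.degree a = 3 then 1/2 else 0
  else if MyWk G b then (if 4 ≤ G.degree a then 1/4 else 0)
  else if G.degree b = 4 then
    (if 7 ≤ G.degree a then 1/2 else if G.degree a = 6 then 1/4 else 0)
  else 0

variable {G}

lemma myg_nonneg (a b : V) : 0 ≤ myg G a b := by
  unfold myg; split_ifs <;> norm_num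

lemma myg_le_one (a b : V) : myg G a b ≤ 1 := by
  unfold myg; split_ifs <;> norm_num

lemma myg_le_half (a b : V) (h : ¬ MyHvy G b) : myg G a b ≤ 1/2 := by
  unfold myg; split_ifs <;> norm_num

lemma myg_out_deg2 (a b : V) (h : G.degree a = 2) : myg G a b = 0 := by
  unfold myg; split_ifs <;> first | omega | norm_num | tauto

lemma myg_out_deg3 (a b : V) (h : G.degree a = 3) (h2 : G.degree b ≠ 2) : myg G a b = 0 := by
  unfold myg; split_ifs <;> first | omega | norm_num | tauto | (exfalso; have := ‹MyWk G b›.1; omega)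

lemma myg_out_small_to_big (a b : V) (h : G.degree a ≤ 5) (h2 : 4 ≤ G.degree b) :
    myg G a b = 0 := by
  unfold myg; split_ifs <;> first | omega | (exfalso; have := ‹MyWk G b›.1; omega) | norm_num | tauto

lemma myg_le_quarter (a b : V) (h : 3 ≤ G.degree b) (h2 : G.degree a ≤ 6) :
    myg G a b ≤ 1/4 := by
  unfold myg; split_ifs <;> first | omega | norm_num | tauto

lemma myg_formula (a b : V) (ha : G.degree a = 4 ∨ G.degree a = 5) (hb : ¬ MyHvy G b) :
    myg G a b = (if G.degree b = 2 then (1/2 : ℚ) else 0) +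
      (if MyWk G b then (1/4 : ℚ) else 0) := by
  have h4 : 4 ≤ G.degree a := by omega
  have h7 : ¬ (7 ≤ G.degree a) := by omega
  have h6 : G.degree a ≠ 6 := by omega
  rcases eq_or_ne (G.degree b) 2 with h2 | h2
  · have hw : ¬ MyWk G b := fun w => by have := w.1; omega
    simp [myg, h2, hb, hw, h4]
  · simp only [myg, h2, if_false, if_neg h2]
    by_cases hw : MyWk G b
    · simp [hw, h4]
    · simp [hw, h7, h6]

lemma myg_in_heavy (a b : V) (h : 4 ≤ G.degree a) (hb : MyHvy G b) : myg G a b = 1 := by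
  have := hb.1
  unfold myg; split_ifs <;> first | omega | norm_num | tauto

lemma myg_in_deg2 (a b : V) (h : 3 ≤ G.degree a) (hb : G.degree b = 2) :
    1/2 ≤ myg G a b := by
  unfold myg; split_ifs <;> first | omega | norm_num | tauto

lemma myg_in_wk (a b : V) (h : 4 ≤ G.degree a) (hb : MyWk G b) : myg G a b = 1/4 := by
  have h3 := hb.1
  unfold myg; split_ifs <;> first | omega | norm_num | tauto

lemma myg_in_deg4 (a b : V) (h : 6 ≤ G.degree a) (hb : G.degree b = 4) :
    1/4 ≤ myg G a b := by
  unfold myg MyWk; split_ifs <;> first | omega | norm_num | tauto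

end Aux

section MoreVals
variable {V : Type} [Fintype V] [DecidableEq V] {G : SimpleGraph V} [DecidableRel G.Adj]

lemma myg_out_deg3_to_deg2 (a b : V) (h : G.degree a = 3) (hb : G.degree b = 2) :
    myg G a b = 1/2 := by
  unfold myg; split_ifs <;> first | omega | norm_num

lemma myg_in_deg4_big (a b : V) (h : 7 ≤ G.degree a) (hb : G.degree b = 4) :
    myg G a b = 1/2 := by
  unfold myg MyWk; split_ifs <;> first | omega | norm_num

lemma ne_of_deg {a b : V} (h : G.degree a ≠ G.degree b) : a ≠ b := fun e => h (e ▸ rfl)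

end MoreVals
section Struct

variable {V : Type} [Fintype V] [DecidableEq V] {G : SimpleGraph V} [DecidableRel G.Adj]

lemma SL1 (nc1 : ¬ ∃ v₁ v₂ v₃ : V, G.Adj v₁ v₂ ∧ G.Adj v₂ v₃ ∧ v₁ ≠ v₃ ∧
      G.degree v₁ = 2 ∧ G.degree v₂ ≤ 3 ∧ G.degree v₃ ≤ 3)
    {v x z : V} (h1 : G.Adj v x) (h2 : G.Adj x z) (h3 : z ≠ v)
    (h4 : G.degree v = 2) (h5 : G.degree x ≤ 3) : 4 ≤ G.degree z := by
  by_contra h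
  exact nc1 ⟨v, x, z, h1, h2, h3.symm, h4, h5, by omega⟩

lemma SL2 (nc1 : ¬ ∃ v₁ v₂ v₃ : V, G.Adj v₁ v₂ ∧ G.Adj v₂ v₃ ∧ v₁ ≠ v₃ ∧
      G.degree v₁ = 2 ∧ G.degree v₂ ≤ 3 ∧ G.degree v₃ ≤ 3)
    {v x y : V} (h1 : G.Adj v x) (h2 : G.Adj v y) (hxy : x ≠ y)
    (hv : G.degree v ≤ 3) (hx : G.degree x = 2) (hy : G.degree y = 2) : False :=
  nc1 ⟨x, v, y, h1.symm, h2, hxy, hx, hv, by omega⟩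

lemma SL3 (nc2 : ¬ ∃ v₁ v₂ v₃ v₄ : V, G.Adj v₁ v₂ ∧ G.Adj v₂ v₃ ∧ G.Adj v₃ v₄ ∧
      v₁ ≠ v₃ ∧ v₁ ≠ v₄ ∧ v₂ ≠ v₄ ∧
      G.degree v₁ = 2 ∧ G.degree v₂ = 2 ∧ G.degree v₄ = 2)
    (htri : ¬ ∃ a b c : V, G.Adj a b ∧ G.Adj b c ∧ G.Adj a c ∧
      G.degree a = 2 ∧ G.degree b = 2)
    {u x v z : V} (aux : G.Adj u x) (axv : G.Adj x v) (avz : G.Adj v z)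
    (du : G.degree u = 2) (dx : G.degree x = 2) (dv : 4 ≤ G.degree v)
    (hzx : z ≠ x) : G.degree z ≠ 2 := by
  intro dz
  have huv : u ≠ v := by rintro rfl; omega
  have huz : u ≠ z := by
    rintro rfl
    exact htri ⟨u, x, v, aux, axv, avz.symm, du, dx⟩
  exact nc2 ⟨u, x, v, z, aux, axv, avz, huv, huz, fun h => hzx h.symm, du, dx, dz⟩

lemma SL4 (nc3 : ¬ ∃ v₁ v₂ v₃ v₄ : V, G.Adj v₁ v₂ ∧ G.Adj v₂ v₃ ∧ G.Adj v₃ v₄ ∧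
      v₁ ≠ v₃ ∧ v₁ ≠ v₄ ∧ v₂ ≠ v₄ ∧
      G.degree v₁ = 2 ∧ G.degree v₂ = 2 ∧ G.degree v₃ = 4 ∧ G.degree v₄ = 3)
    {u x v z : V} (aux : G.Adj u x) (axv : G.Adj x v) (avz : G.Adj v z)
    (du : G.degree u = 2) (dx : G.degree x = 2) (dv : G.degree v = 4)
    (hzx : z ≠ x) : G.degree z ≠ 3 := by
  intro dz
  have huv : u ≠ v := by rintro rfl; omega
  have huz : u ≠ z := by rintro rfl; omega
  exact nc3 ⟨u, x, v, z, aux, axv, avz, huv, huz, fun h => hzx h.symm, du, dx, dv, dz⟩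

lemma my_card4 {s : Finset V} (h : s.card = 4) :
    ∃ a b c d : V, a ≠ b ∧ a ≠ c ∧ a ≠ d ∧ b ≠ c ∧ b ≠ d ∧ c ≠ d ∧ s = {a, b, c, d} := by
  obtain ⟨a, t, hat, hts, ht⟩ := Finset.card_eq_succ.mp h
  obtain ⟨b, c, d, hbc, hbd, hcd, rfl⟩ := Finset.card_eq_three.mp ht
  simp only [Finset.mem_insert, Finset.mem_singleton, not_or] at hat
  exact ⟨a, b, c, d, hat.1, hat.2.1, hat.2.2, hbc, hbd, hcd, hts.symm⟩

lemma my_card4' {s : Finset V} (h : 4 ≤ s.card) :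
    ∃ a b c d : V, a ≠ b ∧ a ≠ c ∧ a ≠ d ∧ b ≠ c ∧ b ≠ d ∧ c ≠ d ∧
      a ∈ s ∧ b ∈ s ∧ c ∈ s ∧ d ∈ s := by
  obtain ⟨t, hts, ht⟩ := Finset.exists_subset_card_eq h
  obtain ⟨a, b, c, d, h1, h2, h3, h4, h5, h6, rfl⟩ := my_card4 ht
  refine ⟨a, b, c, d, h1, h2, h3, h4, h5, h6, ?_, ?_, ?_, ?_⟩ <;>
    apply hts <;> simp

lemma swap_sum (G : SimpleGraph V) [DecidableRel G.Adj] (F : V → V → ℚ) :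
    ∑ v : V, ∑ u ∈ G.neighborFinset v, F v u
      = ∑ v : V, ∑ u ∈ G.neighborFinset v, F u v := by
  have key : ∀ (H : V → V → ℚ), ∑ v : V, ∑ u ∈ G.neighborFinset v, H v u
      = ∑ v : V, ∑ u : V, if G.Adj v u then H v u else 0 := by
    intro H
    refine Finset.sum_congr rfl fun v _ => ?_
    rw [SimpleGraph.neighborFinset_eq_filter, Finset.sum_filter]
  rw [key, key]
  rw [Finset.sum_comm]
  refine Finset.sum_congr rfl fun v _ => Finset.sum_congr rfl fun u _ => ?_
  congr 1
  · exact propext (G.adj_comm u v)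

end Struct
section Keys

variable {V : Type} [Fintype V] [DecidableEq V] {G : SimpleGraph V} [DecidableRel G.Adj]

lemma heavy_nbrs_big
    (nc2 : ¬ ∃ v₁ v₂ v₃ v₄ : V, G.Adj v₁ v₂ ∧ G.Adj v₂ v₃ ∧ G.Adj v₃ v₄ ∧
      v₁ ≠ v₃ ∧ v₁ ≠ v₄ ∧ v₂ ≠ v₄ ∧
      G.degree v₁ = 2 ∧ G.degree v₂ = 2 ∧ G.degree v₄ = 2)
    (htri : ¬ ∃ a b c : V, G.Adj a b ∧ G.Adj b c ∧ G.Adj a c ∧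
      G.degree a = 2 ∧ G.degree b = 2)
    (hδ1 : ∀ v, 2 ≤ G.degree v)
    {v x : V} (hv : 4 ≤ G.degree v) (hxN : x ∈ G.neighborFinset v) (hH : MyHvy G x)
    {z : V} (hzN : z ∈ G.neighborFinset v) (hzx : z ≠ x) : 3 ≤ G.degree z := by
  obtain ⟨dx2, u, huN, du⟩ := hH
  have aux : G.Adj u x := ((SimpleGraph.mem_neighborFinset G x u).mp huN).symm
  have axv : G.Adj x v := ((SimpleGraph.mem_neighborFinset G v x).mp hxN).symm
  have avz : G.Adj v z := (SimpleGraph.mem_neighborFinset G v z).mp hzN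
  have h2 := SL3 nc2 htri aux axv avz du dx2 hv hzx
  have := hδ1 z; omega

lemma key_deg2
    (hδ1 : ∀ v, 2 ≤ G.degree v)
    (nc1 : ¬ ∃ v₁ v₂ v₃ : V, G.Adj v₁ v₂ ∧ G.Adj v₂ v₃ ∧ v₁ ≠ v₃ ∧
      G.degree v₁ = 2 ∧ G.degree v₂ ≤ 3 ∧ G.degree v₃ ≤ 3)
    {v : V} (hv : G.degree v = 2) :
    ∑ u ∈ G.neighborFinset v, myg G v u + 3
      ≤ (G.degree v : ℚ) + ∑ u ∈ G.neighborFinset v, myg G u v := by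
  have hS : ∑ u ∈ G.neighborFinset v, myg G v u = 0 :=
    Finset.sum_eq_zero fun u _ => myg_out_deg2 _ _ hv
  have hcard : (G.neighborFinset v).card = 2 := by
    rw [G.card_neighborFinset_eq_degree]; exact hv
  obtain ⟨x, y, hxy, hN⟩ := Finset.card_eq_two.mp hcard
  have hxm : x ∈ G.neighborFinset v := by rw [hN]; simp
  have hym : y ∈ G.neighborFinset v := by rw [hN]; simp
  have hx : G.Adj v x := (SimpleGraph.mem_neighborFinset G v x).mp hxm
  have hy : G.Adj v y := (SimpleGraph.mem_neighborFinset G v y).mp hym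
  have hR : ∑ u ∈ G.neighborFinset v, myg G u v = myg G x v + myg G y v := by
    rw [hN, Finset.sum_pair hxy]
  rw [hS, hR, hv]
  have claim : 1 ≤ myg G x v + myg G y v := by
    rcases eq_or_ne (G.degree x) 2 with dx | dx
    · have hHv : MyHvy G v := ⟨hv, x, hxm, dx⟩
      have d4 : 4 ≤ G.degree y := SL1 nc1 hx.symm hy hxy.symm dx (by omega)
      have h1 : myg G y v = 1 := myg_in_heavy _ _ d4 hHv
      have h0 : (0:ℚ) ≤ myg G x v := myg_nonneg _ _
      linarith
    rcases eq_or_ne (G.degree y) 2 with dy | dy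
    · have hHv : MyHvy G v := ⟨hv, y, hym, dy⟩
      have d4 : 4 ≤ G.degree x := SL1 nc1 hy.symm hx hxy dy (by omega)
      have h1 : myg G x v = 1 := myg_in_heavy _ _ d4 hHv
      have h0 : (0:ℚ) ≤ myg G y v := myg_nonneg _ _
      linarith
    · have dx3 : 3 ≤ G.degree x := by have := hδ1 x; omega
      have dy3 : 3 ≤ G.degree y := by have := hδ1 y; omega
      have h1 := myg_in_deg2 x v dx3 hv
      have h2 := myg_in_deg2 y v dy3 hv
      linarith
  push_cast
  linarith

lemma key_deg3
    (nc1 : ¬ ∃ v₁ v₂ v₃ : V, G.Adj v₁ v₂ ∧ G.Adj v₂ v₃ ∧ v₁ ≠ v₃ ∧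
      G.degree v₁ = 2 ∧ G.degree v₂ ≤ 3 ∧ G.degree v₃ ≤ 3)
    {v : V} (hv : G.degree v = 3) :
    ∑ u ∈ G.neighborFinset v, myg G v u + 3
      ≤ (G.degree v : ℚ) + ∑ u ∈ G.neighborFinset v, myg G u v := by
  have hR0 : (0:ℚ) ≤ ∑ u ∈ G.neighborFinset v, myg G u v :=
    Finset.sum_nonneg fun u _ => myg_nonneg _ _
  by_cases hex : ∃ w ∈ G.neighborFinset v, G.degree w = 2
  · obtain ⟨w, hwN, dw⟩ := hex
    have hvw : G.Adj v w := (SimpleGraph.mem_neighborFinset G v w).mp hwN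
    have hbig : ∀ u ∈ (G.neighborFinset v).erase w, 4 ≤ G.degree u := by
      intro u hu
      obtain ⟨huw, huN⟩ := Finset.mem_erase.mp hu
      exact SL1 nc1 hvw.symm ((SimpleGraph.mem_neighborFinset G v u).mp huN) huw dw (by omega)
    have hS : ∑ u ∈ G.neighborFinset v, myg G v u = 1/2 := by
      rw [← Finset.add_sum_erase _ _ hwN]
      rw [myg_out_deg3_to_deg2 _ _ hv dw]
      have : ∑ u ∈ (G.neighborFinset v).erase w, myg G v u = 0 :=
        Finset.sum_eq_zero fun u hu => myg_out_deg3 _ _ hv (by have := hbig u hu; omega)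
      rw [this]; norm_num
    have hW : MyWk G v := ⟨hv, w, hwN, dw⟩
    have hRe : ∑ u ∈ (G.neighborFinset v).erase w, myg G u v
        ≤ ∑ u ∈ G.neighborFinset v, myg G u v :=
      Finset.sum_le_sum_of_subset_of_nonneg (Finset.erase_subset _ _)
        (fun u _ _ => myg_nonneg _ _)
    have hcard : ((G.neighborFinset v).erase w).card = 2 := by
      rw [Finset.card_erase_of_mem hwN, G.card_neighborFinset_eq_degree, hv]
    have hRe2 : ∑ u ∈ (G.neighborFinset v).erase w, myg G u v = 1/2 := by
      have : ∀ u ∈ (G.neighborFinset v).erase w, myg G u v = 1/4 := fun u hu =>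
        myg_in_wk _ _ (hbig u hu) hW
      rw [Finset.sum_congr rfl this, Finset.sum_const, hcard]
      norm_num
    rw [hS, hv]
    push_cast
    linarith
  · push_neg at hex
    have hS : ∑ u ∈ G.neighborFinset v, myg G v u = 0 :=
      Finset.sum_eq_zero fun u hu => myg_out_deg3 _ _ hv (hex u hu)
    rw [hS, hv]
    push_cast
    linarith

lemma key_deg6
    (nc2 : ¬ ∃ v₁ v₂ v₃ v₄ : V, G.Adj v₁ v₂ ∧ G.Adj v₂ v₃ ∧ G.Adj v₃ v₄ ∧
      v₁ ≠ v₃ ∧ v₁ ≠ v₄ ∧ v₂ ≠ v₄ ∧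
      G.degree v₁ = 2 ∧ G.degree v₂ = 2 ∧ G.degree v₄ = 2)
    (htri : ¬ ∃ a b c : V, G.Adj a b ∧ G.Adj b c ∧ G.Adj a c ∧
      G.degree a = 2 ∧ G.degree b = 2)
    (hδ1 : ∀ v, 2 ≤ G.degree v)
    {v : V} (hv : G.degree v = 6) :
    ∑ u ∈ G.neighborFinset v, myg G v u + 3
      ≤ (G.degree v : ℚ) + ∑ u ∈ G.neighborFinset v, myg G u v := by
  have hR0 : (0:ℚ) ≤ ∑ u ∈ G.neighborFinset v, myg G u v :=
    Finset.sum_nonneg fun u _ => myg_nonneg _ _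
  have hS : ∑ u ∈ G.neighborFinset v, myg G v u ≤ 3 := by
    by_cases hH : ∃ x ∈ G.neighborFinset v, MyHvy G x
    · obtain ⟨x, hxN, hHx⟩ := hH
      have hcard : ((G.neighborFinset v).erase x).card = 5 := by
        rw [Finset.card_erase_of_mem hxN, G.card_neighborFinset_eq_degree, hv]
      have hbd : ∑ u ∈ (G.neighborFinset v).erase x, myg G v u ≤ 5 * (1/4 : ℚ) := by
        have := Finset.sum_le_card_nsmul ((G.neighborFinset v).erase x)
          (fun u => myg G v u) (1/4 : ℚ) (fun u hu => by
            obtain ⟨hux, huN⟩ := Finset.mem_erase.mp hu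
            exact myg_le_quarter _ _
              (heavy_nbrs_big nc2 htri hδ1 (by omega) hxN hHx huN hux) (by omega))
        rw [hcard] at this
        simpa using this
      rw [← Finset.add_sum_erase _ _ hxN]
      have := myg_le_one (G := G) v x
      linarith
    · push_neg at hH
      have := Finset.sum_le_card_nsmul (G.neighborFinset v)
        (fun u => myg G v u) (1/2 : ℚ) (fun u hu => myg_le_half _ _ (hH u hu))
      rw [G.card_neighborFinset_eq_degree, hv] at this
      rw [nsmul_eq_mul] at this
      linarith
  rw [hv]
  push_cast
  linarith

lemma key_big
    (nc2 : ¬ ∃ v₁ v₂ v₃ v₄ : V, G.Adj v₁ v₂ ∧ G.Adj v₂ v₃ ∧ G.Adj v₃ v₄ ∧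
      v₁ ≠ v₃ ∧ v₁ ≠ v₄ ∧ v₂ ≠ v₄ ∧
      G.degree v₁ = 2 ∧ G.degree v₂ = 2 ∧ G.degree v₄ = 2)
    (htri : ¬ ∃ a b c : V, G.Adj a b ∧ G.Adj b c ∧ G.Adj a c ∧
      G.degree a = 2 ∧ G.degree b = 2)
    (hδ1 : ∀ v, 2 ≤ G.degree v)
    {v : V} (hv : 7 ≤ G.degree v) :
    ∑ u ∈ G.neighborFinset v, myg G v u + 3
      ≤ (G.degree v : ℚ) + ∑ u ∈ G.neighborFinset v, myg G u v := by
  have hR0 : (0:ℚ) ≤ ∑ u ∈ G.neighborFinset v, myg G u v :=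
    Finset.sum_nonneg fun u _ => myg_nonneg _ _
  have hS : ∑ u ∈ G.neighborFinset v, myg G v u ≤ (G.degree v : ℚ) - 3 := by
    by_cases hH : ∃ x ∈ G.neighborFinset v, MyHvy G x
    · obtain ⟨x, hxN, hHx⟩ := hH
      have hcard : ((G.neighborFinset v).erase x).card = G.degree v - 1 := by
        rw [Finset.card_erase_of_mem hxN, G.card_neighborFinset_eq_degree]
      have hbd : ∑ u ∈ (G.neighborFinset v).erase x, myg G v u
          ≤ ((G.degree v : ℚ) - 1) * (1/2) := by
        have := Finset.sum_le_card_nsmul ((G.neighborFinset v).erase x)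
          (fun u => myg G v u) (1/2 : ℚ) (fun u hu => by
            obtain ⟨hux, huN⟩ := Finset.mem_erase.mp hu
            have h3 := heavy_nbrs_big nc2 htri hδ1 (by omega) hxN hHx huN hux
            exact myg_le_half _ _ (fun w => by have := w.1; omega))
        rw [hcard] at this
        have hcast : ((G.degree v - 1 : ℕ) : ℚ) = (G.degree v : ℚ) - 1 := by
          have : 1 ≤ G.degree v := by omega
          push_cast [this]; ring
        calc ∑ u ∈ (G.neighborFinset v).erase x, myg G v u
            ≤ (G.degree v - 1 : ℕ) • (1/2 : ℚ) := this
          _ = ((G.degree v : ℚ) - 1) * (1/2) := by rw [nsmul_eq_mul, hcast]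
      rw [← Finset.add_sum_erase _ _ hxN]
      have h1 := myg_le_one (G := G) v x
      have h7 : (7:ℚ) ≤ (G.degree v : ℚ) := by exact_mod_cast hv
      linarith
    · push_neg at hH
      have := Finset.sum_le_card_nsmul (G.neighborFinset v)
        (fun u => myg G v u) (1/2 : ℚ) (fun u hu => myg_le_half _ _ (hH u hu))
      rw [G.card_neighborFinset_eq_degree] at this
      have h7 : (7:ℚ) ≤ (G.degree v : ℚ) := by exact_mod_cast hv
      rw [nsmul_eq_mul] at this
      linarith
  linarith

end Keys
section Keys2

variable {V : Type} [Fintype V] [DecidableEq V] {G : SimpleGraph V} [DecidableRel G.Adj]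

lemma card_four {a b c d : V} (h1 : a ≠ b) (h2 : a ≠ c) (h3 : a ≠ d) (h4 : b ≠ c)
    (h5 : b ≠ d) (h6 : c ≠ d) : ({a, b, c, d} : Finset V).card = 4 := by
  rw [Finset.card_insert_of_notMem (by simp [h1, h2, h3]),
    Finset.card_insert_of_notMem (by simp [h4, h5]),
    Finset.card_insert_of_notMem (by simp [h6]), Finset.card_singleton]

lemma S_formula {v : V} (hd : G.degree v = 4 ∨ G.degree v = 5)
    (hH : ∀ u ∈ G.neighborFinset v, ¬ MyHvy G u) :
    ∑ u ∈ G.neighborFinset v, myg G v u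
      = (((G.neighborFinset v).filter (fun u => G.degree u = 2)).card : ℚ) * (1/2)
      + (((G.neighborFinset v).filter (fun u => MyWk G u)).card : ℚ) * (1/4) := by
  rw [Finset.sum_congr rfl (fun u hu => myg_formula v u hd (hH u hu)),
    Finset.sum_add_distrib, ← Finset.sum_filter, ← Finset.sum_filter,
    Finset.sum_const, Finset.sum_const, nsmul_eq_mul, nsmul_eq_mul]

lemma AB_card {v : V} :
    ((G.neighborFinset v).filter (fun u => G.degree u = 2)).card
      + ((G.neighborFinset v).filter (fun u => MyWk G u)).card ≤ G.degree v := by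
  have hdisj : Disjoint ((G.neighborFinset v).filter (fun u => G.degree u = 2))
      ((G.neighborFinset v).filter (fun u => MyWk G u)) := by
    rw [Finset.disjoint_left]
    intro u hu hu'
    have h2 := (Finset.mem_filter.mp hu).2
    have h3 := (Finset.mem_filter.mp hu').2.1
    omega
  rw [← Finset.card_union_of_disjoint hdisj, ← G.card_neighborFinset_eq_degree]
  exact Finset.card_le_card (Finset.union_subset (Finset.filter_subset _ _)
    (Finset.filter_subset _ _))

lemma key_deg5
    (nc2 : ¬ ∃ v₁ v₂ v₃ v₄ : V, G.Adj v₁ v₂ ∧ G.Adj v₂ v₃ ∧ G.Adj v₃ v₄ ∧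
      v₁ ≠ v₃ ∧ v₁ ≠ v₄ ∧ v₂ ≠ v₄ ∧
      G.degree v₁ = 2 ∧ G.degree v₂ = 2 ∧ G.degree v₄ = 2)
    (htri : ¬ ∃ a b c : V, G.Adj a b ∧ G.Adj b c ∧ G.Adj a c ∧
      G.degree a = 2 ∧ G.degree b = 2)
    (hδ1 : ∀ v, 2 ≤ G.degree v)
    (nc7 : ¬ ∃ w a b c d e : V, G.Adj w a ∧ G.Adj w b ∧ G.Adj w c ∧ G.Adj w d ∧ G.Adj w e ∧
      a ≠ b ∧ a ≠ c ∧ a ≠ d ∧ a ≠ e ∧ b ≠ c ∧ b ≠ d ∧ b ≠ e ∧ c ≠ d ∧ c ≠ e ∧ d ≠ e ∧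
      G.degree w = 5 ∧ G.degree a = 2 ∧ G.degree b = 2 ∧ G.degree c = 2 ∧
      G.degree d = 2 ∧ G.degree e = 2)
    (nc8 : ¬ ∃ w a b c d e : V, G.Adj w a ∧ G.Adj w b ∧ G.Adj w c ∧ G.Adj w d ∧ G.Adj w e ∧
      a ≠ b ∧ a ≠ c ∧ a ≠ d ∧ a ≠ e ∧ b ≠ c ∧ b ≠ d ∧ b ≠ e ∧ c ≠ d ∧ c ≠ e ∧ d ≠ e ∧
      G.degree w = 5 ∧ G.degree a = 2 ∧ G.degree b = 2 ∧ G.degree c = 2 ∧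
      G.degree d = 2 ∧ G.degree e = 3)
    {v : V} (hv : G.degree v = 5) :
    ∑ u ∈ G.neighborFinset v, myg G v u + 3
      ≤ (G.degree v : ℚ) + ∑ u ∈ G.neighborFinset v, myg G u v := by
  have hR0 : (0:ℚ) ≤ ∑ u ∈ G.neighborFinset v, myg G u v :=
    Finset.sum_nonneg fun u _ => myg_nonneg _ _
  have hS : ∑ u ∈ G.neighborFinset v, myg G v u ≤ 2 := by
    by_cases hH : ∃ x ∈ G.neighborFinset v, MyHvy G x
    · obtain ⟨x, hxN, hHx⟩ := hH
      have hcard : ((G.neighborFinset v).erase x).card = 4 := by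
        rw [Finset.card_erase_of_mem hxN, G.card_neighborFinset_eq_degree, hv]
      have hbd := Finset.sum_le_card_nsmul ((G.neighborFinset v).erase x)
        (fun u => myg G v u) (1/4 : ℚ) (fun u hu => by
          obtain ⟨hux, huN⟩ := Finset.mem_erase.mp hu
          exact myg_le_quarter _ _
            (heavy_nbrs_big nc2 htri hδ1 (by omega) hxN hHx huN hux) (by omega))
      rw [hcard, nsmul_eq_mul] at hbd
      rw [← Finset.add_sum_erase _ _ hxN]
      have := myg_le_one (G := G) v x
      linarith
    · push_neg at hH
      rw [S_formula (Or.inr hv) hH]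
      set A := (G.neighborFinset v).filter (fun u => G.degree u = 2) with hA
      set B := (G.neighborFinset v).filter (fun u => MyWk G u) with hB
      have hab : A.card + B.card ≤ 5 := by rw [← hv]; exact AB_card
      by_cases hA3 : A.card ≤ 3
      · have h1 : (A.card : ℚ) ≤ 3 := by exact_mod_cast hA3
        have h2 : (A.card : ℚ) + B.card ≤ 5 := by exact_mod_cast hab
        linarith
      · obtain ⟨a, b, c, d, hab1, hac, had, hbc, hbd, hcd, haA, hbA, hcA, hdA⟩ :=
          my_card4' (by omega : 4 ≤ A.card)
        have hmem : ∀ u ∈ A, u ∈ G.neighborFinset v ∧ G.degree u = 2 := fun u hu =>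
          Finset.mem_filter.mp hu
        obtain ⟨haN, da⟩ := hmem a haA
        obtain ⟨hbN, db⟩ := hmem b hbA
        obtain ⟨hcN, dc⟩ := hmem c hcA
        obtain ⟨hdN, dd⟩ := hmem d hdA
        have hsub : ({a, b, c, d} : Finset V) ⊆ G.neighborFinset v := by
          intro u hu
          simp only [Finset.mem_insert, Finset.mem_singleton] at hu
          rcases hu with rfl | rfl | rfl | rfl <;> assumption
        have hsd : ((G.neighborFinset v) \ {a, b, c, d}).card = 1 := by
          rw [Finset.card_sdiff_of_subset hsub, G.card_neighborFinset_eq_degree, hv,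
            card_four hab1 hac had hbc hbd hcd]
        obtain ⟨e, he⟩ := Finset.card_eq_one.mp hsd
        have heM : e ∈ (G.neighborFinset v) \ ({a, b, c, d} : Finset V) := by
          rw [he]; exact Finset.mem_singleton_self e
        obtain ⟨heN, heNot⟩ := Finset.mem_sdiff.mp heM
        simp only [Finset.mem_insert, Finset.mem_singleton, not_or] at heNot
        obtain ⟨hea, heb, hec, hed⟩ := heNot
        have adj : ∀ u ∈ G.neighborFinset v, G.Adj v u := fun u hu =>
          (SimpleGraph.mem_neighborFinset G v u).mp hu
        rcases eq_or_ne (G.degree e) 2 with de | de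
        · exact (nc7 ⟨v, a, b, c, d, e, adj a haN, adj b hbN, adj c hcN, adj d hdN,
            adj e heN, hab1, hac, had, fun h => hea h.symm, hbc, hbd,
            fun h => heb h.symm, hcd, fun h => hec h.symm, fun h => hed h.symm,
            hv, da, db, dc, dd, de⟩).elim
        rcases eq_or_ne (G.degree e) 3 with de3 | de3
        · exact (nc8 ⟨v, a, b, c, d, e, adj a haN, adj b hbN, adj c hcN, adj d hdN,
            adj e heN, hab1, hac, had, fun h => hea h.symm, hbc, hbd,
            fun h => heb h.symm, hcd, fun h => hec h.symm, fun h => hed h.symm,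
            hv, da, db, dc, dd, de3⟩).elim
        · have hin : ∀ u ∈ G.neighborFinset v, u ∈ ({a, b, c, d} : Finset V) ∨ u = e := by
            intro u huN
            by_cases h : u ∈ ({a, b, c, d} : Finset V)
            · exact Or.inl h
            · right
              have : u ∈ (G.neighborFinset v) \ ({a, b, c, d} : Finset V) :=
                Finset.mem_sdiff.mpr ⟨huN, h⟩
              rw [he, Finset.mem_singleton] at this; exact this
          have hA4 : A.card ≤ 4 := by
            have hAsub : A ⊆ ({a, b, c, d} : Finset V) := by
              intro u hu
              obtain ⟨huN, du⟩ := hmem u hu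
              rcases hin u huN with h | h
              · exact h
              · subst h; exact absurd du de
            exact le_trans (Finset.card_le_card hAsub)
              (le_of_eq (card_four hab1 hac had hbc hbd hcd))
          have hB0 : B.card = 0 := by
            rw [Finset.card_eq_zero, Finset.eq_empty_iff_forall_notMem]
            intro u hu
            obtain ⟨huN, hwk⟩ := Finset.mem_filter.mp hu
            have du3 := hwk.1
            rcases hin u huN with h | h
            · simp only [Finset.mem_insert, Finset.mem_singleton] at h
              rcases h with rfl | rfl | rfl | rfl <;> omega
            · subst h; exact de3 du3
          have h1 : (A.card : ℚ) ≤ 4 := by exact_mod_cast hA4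
          rw [hB0]
          push_cast
          linarith
  rw [hv]; push_cast; linarith

end Keys2
section Keys3

variable {V : Type} [Fintype V] [DecidableEq V] {G : SimpleGraph V} [DecidableRel G.Adj]

set_option maxHeartbeats 2000000 in
lemma key_deg4
    (nc2 : ¬ ∃ v₁ v₂ v₃ v₄ : V, G.Adj v₁ v₂ ∧ G.Adj v₂ v₃ ∧ G.Adj v₃ v₄ ∧
      v₁ ≠ v₃ ∧ v₁ ≠ v₄ ∧ v₂ ≠ v₄ ∧
      G.degree v₁ = 2 ∧ G.degree v₂ = 2 ∧ G.degree v₄ = 2)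
    (nc3 : ¬ ∃ v₁ v₂ v₃ v₄ : V, G.Adj v₁ v₂ ∧ G.Adj v₂ v₃ ∧ G.Adj v₃ v₄ ∧
      v₁ ≠ v₃ ∧ v₁ ≠ v₄ ∧ v₂ ≠ v₄ ∧
      G.degree v₁ = 2 ∧ G.degree v₂ = 2 ∧ G.degree v₃ = 4 ∧ G.degree v₄ = 3)
    (htri : ¬ ∃ a b c : V, G.Adj a b ∧ G.Adj b c ∧ G.Adj a c ∧
      G.degree a = 2 ∧ G.degree b = 2)
    (hδ1 : ∀ v, 2 ≤ G.degree v)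
    (nc4 : ¬ ∃ w a b c d : V, G.Adj w a ∧ G.Adj w b ∧ G.Adj w c ∧ G.Adj w d ∧
      a ≠ b ∧ a ≠ c ∧ a ≠ d ∧ b ≠ c ∧ b ≠ d ∧ c ≠ d ∧
      G.degree w = 4 ∧ G.degree a = 2 ∧ G.degree b = 2 ∧ G.degree c = 2 ∧
      G.degree d ≤ 6)
    (nc5 : ¬ ∃ w a b c d : V, G.Adj w a ∧ G.Adj w b ∧ G.Adj w c ∧ G.Adj w d ∧
      a ≠ b ∧ a ≠ c ∧ a ≠ d ∧ b ≠ c ∧ b ≠ d ∧ c ≠ d ∧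
      G.degree w = 4 ∧ G.degree a = 2 ∧ G.degree b = 2 ∧ G.degree c = 3 ∧
      G.degree d ≤ 5)
    (nc6 : ¬ ∃ w a b c d : V, G.Adj w a ∧ G.Adj w b ∧ G.Adj w c ∧ G.Adj w d ∧
      a ≠ b ∧ a ≠ c ∧ a ≠ d ∧ b ≠ c ∧ b ≠ d ∧ c ≠ d ∧
      G.degree w = 4 ∧ G.degree a = 2 ∧ G.degree b = 3 ∧ G.degree c = 3 ∧
      G.degree d = 3)
    {v : V} (hv : G.degree v = 4) :
    ∑ u ∈ G.neighborFinset v, myg G v u + 3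
      ≤ (G.degree v : ℚ) + ∑ u ∈ G.neighborFinset v, myg G u v := by
  have hR0 : (0:ℚ) ≤ ∑ u ∈ G.neighborFinset v, myg G u v :=
    Finset.sum_nonneg fun u _ => myg_nonneg _ _
  have adj : ∀ u ∈ G.neighborFinset v, G.Adj v u := fun u hu =>
    (SimpleGraph.mem_neighborFinset G v u).mp hu
  by_cases hH : ∃ x ∈ G.neighborFinset v, MyHvy G x
  · obtain ⟨x, hxN, hHx⟩ := hH
    have hbig : ∀ u ∈ (G.neighborFinset v).erase x, 4 ≤ G.degree u := by
      intro u hu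
      obtain ⟨hux, huN⟩ := Finset.mem_erase.mp hu
      have h3 := heavy_nbrs_big nc2 htri hδ1 (by omega) hxN hHx huN hux
      obtain ⟨dx2, w, hwN, dw⟩ := hHx
      have hn3 := SL4 nc3 ((SimpleGraph.mem_neighborFinset G x w).mp hwN).symm
        ((SimpleGraph.mem_neighborFinset G v x).mp hxN).symm (adj u huN) dw dx2 hv hux
      omega
    have hS : ∑ u ∈ G.neighborFinset v, myg G v u ≤ 1 := by
      rw [← Finset.add_sum_erase _ _ hxN]
      have hz : ∑ u ∈ (G.neighborFinset v).erase x, myg G v u = 0 :=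
        Finset.sum_eq_zero fun u hu =>
          myg_out_small_to_big _ _ (by omega) (hbig u hu)
      rw [hz]
      have := myg_le_one (G := G) v x
      linarith
    rw [hv]; push_cast; linarith
  · push_neg at hH
    rw [S_formula (Or.inl hv) hH, hv]
    set A := (G.neighborFinset v).filter (fun u => G.degree u = 2) with hAdef
    set B := (G.neighborFinset v).filter (fun u => MyWk G u) with hBdef
    have hmemA : ∀ u ∈ A, u ∈ G.neighborFinset v ∧ G.degree u = 2 := fun u hu =>
      Finset.mem_filter.mp hu
    have hmemB : ∀ u ∈ B, u ∈ G.neighborFinset v ∧ G.degree u = 3 := fun u hu =>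
      ⟨(Finset.mem_filter.mp hu).1, (Finset.mem_filter.mp hu).2.1⟩
    have hab : A.card + B.card ≤ 4 := by rw [← hv]; exact AB_card
    by_cases h4 : 4 ≤ A.card
    · obtain ⟨a, b, c, d, hab1, hac, had, hbc, hbd, hcd, haA, hbA, hcA, hdA⟩ :=
        my_card4' h4
      obtain ⟨haN, da⟩ := hmemA a haA
      obtain ⟨hbN, db⟩ := hmemA b hbA
      obtain ⟨hcN, dc⟩ := hmemA c hcA
      obtain ⟨hdN, dd⟩ := hmemA d hdA
      exact (nc4 ⟨v, a, b, c, d, adj a haN, adj b hbN, adj c hcN, adj d hdN,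
        hab1, hac, had, hbc, hbd, hcd, hv, da, db, dc, by omega⟩).elim
    by_cases h3 : A.card = 3
    · obtain ⟨a, b, c, hab1, hac, hbc, hAeq⟩ := Finset.card_eq_three.mp h3
      have haA : a ∈ A := by rw [hAeq]; simp
      have hbA : b ∈ A := by rw [hAeq]; simp
      have hcA : c ∈ A := by rw [hAeq]; simp
      obtain ⟨haN, da⟩ := hmemA a haA
      obtain ⟨hbN, db⟩ := hmemA b hbA
      obtain ⟨hcN, dc⟩ := hmemA c hcA
      have hsd : ((G.neighborFinset v) \ A).card = 1 := by
        rw [Finset.card_sdiff_of_subset (Finset.filter_subset _ _),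
          G.card_neighborFinset_eq_degree, hv, h3]
      obtain ⟨e, he⟩ := Finset.card_eq_one.mp hsd
      have heM : e ∈ (G.neighborFinset v) \ A := by
        rw [he]; exact Finset.mem_singleton_self e
      obtain ⟨heN, heA⟩ := Finset.mem_sdiff.mp heM
      have de2 : G.degree e ≠ 2 := fun h => heA (Finset.mem_filter.mpr ⟨heN, h⟩)
      have hea : a ≠ e := fun h => heA (h ▸ haA)
      have heb : b ≠ e := fun h => heA (h ▸ hbA)
      have hec : c ≠ e := fun h => heA (h ▸ hcA)
      have de7 : 7 ≤ G.degree e := by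
        by_contra h
        exact nc4 ⟨v, a, b, c, e, adj a haN, adj b hbN, adj c hcN, adj e heN,
          hab1, hac, hea, hbc, heb, hec, hv, da, db, dc, by omega⟩
      have hin : ∀ u ∈ G.neighborFinset v, u ∈ A ∨ u = e := by
        intro u huN
        by_cases h : u ∈ A
        · exact Or.inl h
        · right
          have : u ∈ (G.neighborFinset v) \ A := Finset.mem_sdiff.mpr ⟨huN, h⟩
          rw [he, Finset.mem_singleton] at this; exact this
      have hB0 : B.card = 0 := by
        rw [Finset.card_eq_zero, Finset.eq_empty_iff_forall_notMem]
        intro u hu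
        obtain ⟨huN, du3⟩ := hmemB u hu
        rcases hin u huN with h | h
        · have := (hmemA u h).2; omega
        · subst h; omega
      have hRe : (1/2 : ℚ) ≤ ∑ u ∈ G.neighborFinset v, myg G u v := by
        have h1 : myg G e v = 1/2 := myg_in_deg4_big e v de7 hv
        calc (1/2 : ℚ) = myg G e v := h1.symm
          _ ≤ _ := Finset.single_le_sum (f := fun u => myg G u v) (fun u _ => myg_nonneg _ _) heN
      rw [h3, hB0]; push_cast; linarith
    by_cases h2 : A.card = 2
    · by_cases hBne : B.Nonempty
      · obtain ⟨c0, hc0B⟩ := hBne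
        obtain ⟨hc0N, dc0⟩ := hmemB c0 hc0B
        obtain ⟨a, b, hab1, hAeq⟩ := Finset.card_eq_two.mp h2
        have haA : a ∈ A := by rw [hAeq]; simp
        have hbA : b ∈ A := by rw [hAeq]; simp
        obtain ⟨haN, da⟩ := hmemA a haA
        obtain ⟨hbN, db⟩ := hmemA b hbA
        have hac0 : a ≠ c0 := ne_of_deg (G := G) (a := a) (b := c0) (by omega)
        have hbc0 : b ≠ c0 := ne_of_deg (G := G) (a := b) (b := c0) (by omega)
        have hsub : ({a, b, c0} : Finset V) ⊆ G.neighborFinset v := by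
          intro u hu
          simp only [Finset.mem_insert, Finset.mem_singleton] at hu
          rcases hu with rfl | rfl | rfl <;> assumption
        have hc3 : ({a, b, c0} : Finset V).card = 3 := by
          rw [Finset.card_insert_of_notMem (by simp [hab1, hac0]),
            Finset.card_insert_of_notMem (by simp [hbc0]), Finset.card_singleton]
        have hsd : ((G.neighborFinset v) \ {a, b, c0}).card = 1 := by
          rw [Finset.card_sdiff_of_subset hsub, G.card_neighborFinset_eq_degree, hv, hc3]
        obtain ⟨f0, hf⟩ := Finset.card_eq_one.mp hsd
        have hfM : f0 ∈ (G.neighborFinset v) \ ({a, b, c0} : Finset V) := by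
          rw [hf]; exact Finset.mem_singleton_self f0
        obtain ⟨hfN, hfNot⟩ := Finset.mem_sdiff.mp hfM
        simp only [Finset.mem_insert, Finset.mem_singleton, not_or] at hfNot
        obtain ⟨hfa, hfb, hfc0⟩ := hfNot
        have hf6 : 6 ≤ G.degree f0 := by
          by_contra h
          exact nc5 ⟨v, a, b, c0, f0, adj a haN, adj b hbN, adj c0 hc0N, adj f0 hfN,
            hab1, hac0, fun hh => hfa hh.symm, hbc0, fun hh => hfb hh.symm,
            fun hh => hfc0 hh.symm, hv, da, db, dc0, by omega⟩
        have hin : ∀ u ∈ G.neighborFinset v, u ∈ ({a, b, c0} : Finset V) ∨ u = f0 := by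
          intro u huN
          by_cases h : u ∈ ({a, b, c0} : Finset V)
          · exact Or.inl h
          · right
            have : u ∈ (G.neighborFinset v) \ ({a, b, c0} : Finset V) :=
              Finset.mem_sdiff.mpr ⟨huN, h⟩
            rw [hf, Finset.mem_singleton] at this; exact this
        have hB1 : B.card = 1 := by
          have hBsub : B ⊆ {c0} := by
            intro u hu
            obtain ⟨huN, du3⟩ := hmemB u hu
            rcases hin u huN with h | h
            · simp only [Finset.mem_insert, Finset.mem_singleton] at h
              rcases h with rfl | rfl | rfl
              · omega
              · omega
              · exact Finset.mem_singleton_self _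
            · subst h; omega
          have h1 : B.card ≤ 1 := le_trans (Finset.card_le_card hBsub)
            (le_of_eq (Finset.card_singleton _))
          have h2 : 1 ≤ B.card := Finset.card_pos.mpr ⟨c0, hc0B⟩
          omega
        have hRe : (1/4 : ℚ) ≤ ∑ u ∈ G.neighborFinset v, myg G u v := by
          have h1 := myg_in_deg4 f0 v hf6 hv
          calc (1/4 : ℚ) ≤ myg G f0 v := h1
            _ ≤ _ := Finset.single_le_sum (f := fun u => myg G u v) (fun u _ => myg_nonneg _ _) hfN
        rw [h2, hB1]; push_cast; linarith
      · have hB0 : B.card = 0 := by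
          rw [Finset.card_eq_zero]
          exact Finset.not_nonempty_iff_eq_empty.mp hBne
        rw [h2, hB0]; push_cast; linarith
    by_cases h1 : A.card = 1
    · by_cases hB3 : 3 ≤ B.card
      · obtain ⟨a, hAeq⟩ := Finset.card_eq_one.mp h1
        have haA : a ∈ A := by rw [hAeq]; simp
        obtain ⟨haN, da⟩ := hmemA a haA
        obtain ⟨t, htB, ht3⟩ := Finset.exists_subset_card_eq hB3
        obtain ⟨x, y, z, hxy, hxz, hyz, hteq⟩ := Finset.card_eq_three.mp ht3
        have hxB : x ∈ B := htB (by rw [hteq]; simp)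
        have hyB : y ∈ B := htB (by rw [hteq]; simp)
        have hzB : z ∈ B := htB (by rw [hteq]; simp)
        obtain ⟨hxN, dx⟩ := hmemB x hxB
        obtain ⟨hyN, dy⟩ := hmemB y hyB
        obtain ⟨hzN, dz⟩ := hmemB z hzB
        exact (nc6 ⟨v, a, x, y, z, adj a haN, adj x hxN, adj y hyN, adj z hzN,
          ne_of_deg (G := G) (a := a) (b := x) (by omega),
          ne_of_deg (G := G) (a := a) (b := y) (by omega),
          ne_of_deg (G := G) (a := a) (b := z) (by omega),
          hxy, hxz, hyz, hv, da, dx, dy, dz⟩).elim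
      · have hB2 : (B.card : ℚ) ≤ 2 := by
          have : B.card ≤ 2 := by omega
          exact_mod_cast this
        rw [h1]; push_cast; linarith
    · have hA0 : A.card = 0 := by omega
      have hB4 : (B.card : ℚ) ≤ 4 := by
        have : B.card ≤ 4 := by omega
        exact_mod_cast this
      rw [hA0]; push_cast; linarith

end Keys3
theorem stmt_6 {V : Type} [Fintype V] [DecidableEq V] (G : SimpleGraph V)
    [DecidableRel G.Adj]
    (hδ : (∀ v, 2 ≤ G.degree v) ∧ (∃ v, G.degree v = 2))
    (havg : (2 * G.edgeFinset.card : ℚ) / Fintype.card V < 3)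
    (htri : ¬ ∃ a b c : V, G.Adj a b ∧ G.Adj b c ∧ G.Adj a c ∧
      G.degree a = 2 ∧ G.degree b = 2) :
    -- a (2, 3⁻, 3⁻)-path
    (∃ v₁ v₂ v₃ : V, G.Adj v₁ v₂ ∧ G.Adj v₂ v₃ ∧ v₁ ≠ v₃ ∧
        G.degree v₁ = 2 ∧ G.degree v₂ ≤ 3 ∧ G.degree v₃ ≤ 3) ∨
    -- a (2, 2, ∞, 2)-path
    (∃ v₁ v₂ v₃ v₄ : V, G.Adj v₁ v₂ ∧ G.Adj v₂ v₃ ∧ G.Adj v₃ v₄ ∧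
        v₁ ≠ v₃ ∧ v₁ ≠ v₄ ∧ v₂ ≠ v₄ ∧
        G.degree v₁ = 2 ∧ G.degree v₂ = 2 ∧ G.degree v₄ = 2) ∨
    -- a (2, 2, 4, 3)-path
    (∃ v₁ v₂ v₃ v₄ : V, G.Adj v₁ v₂ ∧ G.Adj v₂ v₃ ∧ G.Adj v₃ v₄ ∧
        v₁ ≠ v₃ ∧ v₁ ≠ v₄ ∧ v₂ ≠ v₄ ∧
        G.degree v₁ = 2 ∧ G.degree v₂ = 2 ∧ G.degree v₃ = 4 ∧ G.degree v₄ = 3) ∨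
    -- a (4; 2, 2, 2, 6⁻)-star
    (∃ w a b c d : V, G.Adj w a ∧ G.Adj w b ∧ G.Adj w c ∧ G.Adj w d ∧
        a ≠ b ∧ a ≠ c ∧ a ≠ d ∧ b ≠ c ∧ b ≠ d ∧ c ≠ d ∧
        G.degree w = 4 ∧ G.degree a = 2 ∧ G.degree b = 2 ∧ G.degree c = 2 ∧
        G.degree d ≤ 6) ∨
    -- a (4; 2, 2, 3, 5⁻)-star
    (∃ w a b c d : V, G.Adj w a ∧ G.Adj w b ∧ G.Adj w c ∧ G.Adj w d ∧
        a ≠ b ∧ a ≠ c ∧ a ≠ d ∧ b ≠ c ∧ b ≠ d ∧ c ≠ d ∧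
        G.degree w = 4 ∧ G.degree a = 2 ∧ G.degree b = 2 ∧ G.degree c = 3 ∧
        G.degree d ≤ 5) ∨
    -- a (4; 2, 3, 3, 3)-star
    (∃ w a b c d : V, G.Adj w a ∧ G.Adj w b ∧ G.Adj w c ∧ G.Adj w d ∧
        a ≠ b ∧ a ≠ c ∧ a ≠ d ∧ b ≠ c ∧ b ≠ d ∧ c ≠ d ∧
        G.degree w = 4 ∧ G.degree a = 2 ∧ G.degree b = 3 ∧ G.degree c = 3 ∧
        G.degree d = 3) ∨
    -- a (5; 2, 2, 2, 2, 2)-star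
    (∃ w a b c d e : V, G.Adj w a ∧ G.Adj w b ∧ G.Adj w c ∧ G.Adj w d ∧ G.Adj w e ∧
        a ≠ b ∧ a ≠ c ∧ a ≠ d ∧ a ≠ e ∧ b ≠ c ∧ b ≠ d ∧ b ≠ e ∧ c ≠ d ∧ c ≠ e ∧ d ≠ e ∧
        G.degree w = 5 ∧ G.degree a = 2 ∧ G.degree b = 2 ∧ G.degree c = 2 ∧
        G.degree d = 2 ∧ G.degree e = 2) ∨
    -- a (5; 2, 2, 2, 2, 3)-star
    (∃ w a b c d e : V, G.Adj w a ∧ G.Adj w b ∧ G.Adj w c ∧ G.Adj w d ∧ G.Adj w e ∧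
        a ≠ b ∧ a ≠ c ∧ a ≠ d ∧ a ≠ e ∧ b ≠ c ∧ b ≠ d ∧ b ≠ e ∧ c ≠ d ∧ c ≠ e ∧ d ≠ e ∧
        G.degree w = 5 ∧ G.degree a = 2 ∧ G.degree b = 2 ∧ G.degree c = 2 ∧
        G.degree d = 2 ∧ G.degree e = 3) := by
  obtain ⟨hδ1, v0, hv0⟩ := hδ
  by_contra hcon
  have nc1 := fun h => hcon (Or.inl h)
  have nc2 := fun h => hcon (Or.inr (Or.inl h))
  have nc3 := fun h => hcon (Or.inr (Or.inr (Or.inl h)))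
  have nc4 := fun h => hcon (Or.inr (Or.inr (Or.inr (Or.inl h))))
  have nc5 := fun h => hcon (Or.inr (Or.inr (Or.inr (Or.inr (Or.inl h)))))
  have nc6 := fun h => hcon (Or.inr (Or.inr (Or.inr (Or.inr (Or.inr (Or.inl h))))))
  have nc7 := fun h => hcon (Or.inr (Or.inr (Or.inr (Or.inr (Or.inr (Or.inr (Or.inl h)))))))
  have nc8 := fun h => hcon (Or.inr (Or.inr (Or.inr (Or.inr (Or.inr (Or.inr (Or.inr h)))))))
  have key : ∀ v : V, ∑ u ∈ G.neighborFinset v, myg G v u + 3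
      ≤ (G.degree v : ℚ) + ∑ u ∈ G.neighborFinset v, myg G u v := by
    intro v
    have hd := hδ1 v
    rcases (show G.degree v = 2 ∨ G.degree v = 3 ∨ G.degree v = 4 ∨ G.degree v = 5 ∨
        G.degree v = 6 ∨ 7 ≤ G.degree v by omega) with h | h | h | h | h | h
    · exact key_deg2 hδ1 nc1 h
    · exact key_deg3 nc1 h
    · exact key_deg4 nc2 nc3 htri hδ1 nc4 nc5 nc6 h
    · exact key_deg5 nc2 htri hδ1 nc7 nc8 h
    · exact key_deg6 nc2 htri hδ1 h
    · exact key_big nc2 htri hδ1 h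
  have hsum := Finset.sum_le_sum (fun v (_ : v ∈ Finset.univ) => key v)
  rw [Finset.sum_add_distrib, Finset.sum_add_distrib] at hsum
  have hswap := swap_sum G (fun a b => myg G a b)
  rw [hswap] at hsum
  have hc : ∑ _v : V, (3:ℚ) = 3 * Fintype.card V := by
    rw [Finset.sum_const, nsmul_eq_mul, mul_comm]
    rfl
  have hdeg : ∑ v : V, (G.degree v : ℚ) = 2 * (G.edgeFinset.card : ℚ) := by
    exact_mod_cast congrArg (fun n : ℕ => (n : ℚ)) G.sum_degrees_eq_twice_card_edges
  rw [hc, hdeg] at hsum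
  have hpos : 0 < (Fintype.card V : ℚ) := by
    have : 0 < Fintype.card V := Fintype.card_pos_iff.mpr ⟨v0⟩
    exact_mod_cast this
  rw [div_lt_iff₀ hpos] at havg
  linarith
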